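/- Let Ω₁ be a nonempty bounded open convex subset of ℝ^d with boundary Γ = frontier(Ω₁), and let φ be the signed distance function of Γ. Then φ is a convex function on ℝ^d: for all x₁, x₂ ∈ ℝ^d and all θ ∈ [0,1], φ(θx₁ + (1−θ)x₂) ≤ θφ(x₁) + (1−θ)φ(x₂). -/

import Mathlib

open Classical in
noncomputable def sdf {d : ℕ} (Ω : Set (EuclideanSpace ℝ (Fin d)))
    (x : EuclideanSpace ℝ (Fin d)) : ℝ :=
  if x ∈ Ω then -(Metric.infDist x (frontier Ω)) else Metric.infDist x (frontier Ω)

open Metric RealInnerProductSpace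

/-- A preconnected set meeting both `s` and its complement meets the frontier of `s`. -/
lemma aux_preconn_frontier {X : Type*} [TopologicalSpace X] {t s : Set X}
    (ht : IsPreconnected t) (h1 : (t ∩ s).Nonempty) (h2 : (t \ s).Nonempty) :
    (t ∩ frontier s).Nonempty := by
  by_contra h
  rw [Set.not_nonempty_iff_eq_empty] at h
  have hnf : ∀ z ∈ t, z ∉ frontier s := fun z hz hf =>
    Set.eq_empty_iff_forall_notMem.1 h z ⟨hz, hf⟩
  have hsub : t ⊆ interior s ∪ interior sᶜ := by
    intro z hz
    by_cases hzc : z ∈ closure s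
    · left; by_contra hi; exact hnf z hz ⟨hzc, hi⟩
    · right; rw [interior_compl]; exact hzc
  obtain ⟨a, hat, has⟩ := h1
  obtain ⟨b, hbt, hbs⟩ := h2
  have h1' : (t ∩ interior s).Nonempty := by
    refine ⟨a, hat, ?_⟩
    by_contra hi
    exact hnf a hat ⟨subset_closure has, hi⟩
  have h2' : (t ∩ interior sᶜ).Nonempty := by
    refine ⟨b, hbt, ?_⟩
    by_contra hi
    refine hnf b hbt ?_
    rw [← frontier_compl]
    exact ⟨subset_closure hbs, hi⟩
  obtain ⟨z, _, hz1, hz2⟩ := ht (interior s) (interior sᶜ) isOpen_interior isOpen_interior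
    hsub h1' h2'
  exact interior_subset hz2 (interior_subset hz1)

variable {d : ℕ}

local notation "E" => EuclideanSpace ℝ (Fin d)

/-- Lemma A: if `u` is a unit outer normal supporting `Ω` at a boundary point `b`, then the
affine map `x ↦ ⟪x - b, u⟫` is a global minorant of the signed distance function. -/
lemma aux_minorant {Ω : Set E} (hopen : IsOpen Ω)
    (hΓc : IsCompact (frontier Ω)) (hΓne : (frontier Ω).Nonempty)
    {b u : E} (hu : ‖u‖ = 1)
    (hsupp : ∀ w ∈ closure Ω, ⟪w - b, u⟫ ≤ 0) :
    ∀ x : E, ⟪x - b, u⟫ ≤ sdf Ω x := by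
  intro x
  by_cases hx : x ∈ Ω
  · -- interior case
    have hxΓ : x ∉ frontier Ω := fun hf => by
      have := hopen.inter_frontier_eq
      exact Set.eq_empty_iff_forall_notMem.1 this x ⟨hx, hf⟩
    have hR : 0 < infDist x (frontier Ω) :=
      (isClosed_frontier.notMem_iff_infDist_pos hΓne).1 hxΓ
    set R := infDist x (frontier Ω) with hRdef
    have hball : ∀ y : E, dist y x < R → y ∈ Ω := by
      intro y hy
      by_contra hyΩ
      have hseg : IsPreconnected (segment ℝ x y) := (convex_segment x y).isPreconnected
      have h1 : (segment ℝ x y ∩ Ω).Nonempty := ⟨x, left_mem_segment ℝ x y, hx⟩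
      have h2 : (segment ℝ x y \ Ω).Nonempty := ⟨y, right_mem_segment ℝ x y, hyΩ⟩
      obtain ⟨p, hpseg, hpf⟩ := aux_preconn_frontier hseg h1 h2
      have hpd : dist p x ≤ dist y x := by
        have hsub : segment ℝ x y ⊆ Metric.closedBall x (dist y x) :=
          (convex_closedBall x (dist y x)).segment_subset
            (by simp [dist_nonneg]) (by simp [Metric.mem_closedBall])
        simpa [Metric.mem_closedBall, dist_comm] using hsub hpseg
      have : R ≤ dist x p := infDist_le_dist_of_mem hpf
      rw [dist_comm] at this
      linarith
    have key : ⟪x - b, u⟫ ≤ -R := by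
      by_contra hcon
      push_neg at hcon
      set ε := (⟪x - b, u⟫ + R) / 2 with hε
      have hεpos : 0 < ε := by rw [hε]; linarith
      set t := max 0 (R - ε) with ht
      have ht0 : 0 ≤ t := le_max_left _ _
      have htR : t < R := by
        rcases le_or_gt (R - ε) 0 with h' | h'
        · simp [ht, h']; linarith
        · rw [ht, max_eq_right h'.le]; linarith
      have hyΩ : x + t • u ∈ Ω := by
        apply hball
        have : dist (x + t • u) x = t := by
          simp [dist_eq_norm, norm_smul, hu, abs_of_nonneg ht0]
        rw [this]; exact htR
      have := hsupp (x + t • u) (subset_closure hyΩ)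
      have hinner : ⟪x + t • u - b, u⟫ = ⟪x - b, u⟫ + t := by
        have : x + t • u - b = (x - b) + t • u := by abel
        rw [this, inner_add_left, real_inner_smul_left, real_inner_self_eq_norm_sq, hu]
        ring
      rw [hinner] at this
      have htge : R - ε ≤ t := le_max_right _ _
      linarith
    have : sdf Ω x = -R := by simp [sdf, hx, hRdef]
    rw [this]; exact key
  · -- exterior case
    obtain ⟨p, hpΓ, hpd⟩ := hΓc.exists_infDist_eq_dist hΓne x
    have h1 : ⟪p - b, u⟫ ≤ 0 := hsupp p (frontier_subset_closure hpΓ)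
    have h2 : ⟪x - p, u⟫ ≤ ‖x - p‖ := by
      calc ⟪x - p, u⟫ ≤ ‖x - p‖ * ‖u‖ := real_inner_le_norm _ _
        _ = ‖x - p‖ := by rw [hu, mul_one]
    have hsplit : ⟪x - b, u⟫ = ⟪x - p, u⟫ + ⟪p - b, u⟫ := by
      rw [← inner_add_left]; congr 1; abel
    have : sdf Ω x = infDist x (frontier Ω) := by simp [sdf, hx]
    rw [this, hpd, dist_eq_norm]
    linarith

/-- Existence of a supporting affine minorant touching the SDF at `z`. -/
lemma aux_support {Ω : Set E} (hne : Ω.Nonempty) (hbdd : Bornology.IsBounded Ω)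
    (hopen : IsOpen Ω) (hconv : Convex ℝ Ω) [Nontrivial E] (z : E) :
    ∃ b u : E, ‖u‖ = 1 ∧ (∀ w ∈ closure Ω, ⟪w - b, u⟫ ≤ 0) ∧
      sdf Ω z ≤ ⟪z - b, u⟫ := by
  have hΓcl : IsClosed (frontier Ω) := isClosed_frontier
  have hΓbdd : Bornology.IsBounded (frontier Ω) := hbdd.closure.subset frontier_subset_closure
  have hΓc : IsCompact (frontier Ω) := Metric.isCompact_of_isClosed_isBounded hΓcl hΓbdd
  have hΩuniv : Ω ≠ Set.univ := by
    intro h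
    rw [h] at hbdd
    exact NormedSpace.unbounded_univ ℝ E hbdd
  have hΓne : (frontier Ω).Nonempty := nonempty_frontier_iff.2 ⟨hne, hΩuniv⟩
  have hKc : IsCompact (closure Ω) := Metric.isCompact_of_isClosed_isBounded isClosed_closure hbdd.closure
  by_cases hz : z ∈ closure Ω
  · -- z in closure: use Hahn-Banach at the nearest frontier point
    obtain ⟨b, hbΓ, hbd⟩ := hΓc.exists_infDist_eq_dist hΓne z
    have hbΩ : b ∉ Ω := fun hbΩ =>
      Set.eq_empty_iff_forall_notMem.1 hopen.inter_frontier_eq b ⟨hbΩ, hbΓ⟩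
    obtain ⟨f, hf⟩ := geometric_hahn_banach_open_point hconv hopen hbΩ
    set v := (InnerProductSpace.toDual ℝ E).symm f with hv
    have hvx : ∀ x : E, ⟪v, x⟫ = f x := fun x => InnerProductSpace.toDual_symm_apply
    have hvne : v ≠ 0 := by
      intro h0
      obtain ⟨a, ha⟩ := hne
      have := hf a ha
      have h1 : f a = 0 := by rw [← hvx, h0]; simp
      have h2 : f b = 0 := by rw [← hvx, h0]; simp
      rw [h1, h2] at this; exact lt_irrefl _ this
    set u := ‖v‖⁻¹ • v with hudef
    have hvpos : 0 < ‖v‖ := norm_pos_iff.2 hvne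
    have hu : ‖u‖ = 1 := by
      rw [hudef, norm_smul, norm_inv, norm_norm, inv_mul_cancel₀ hvpos.ne']
    have hsuppΩ : ∀ a ∈ Ω, ⟪a - b, u⟫ ≤ 0 := by
      intro a ha
      have : f a < f b := hf a ha
      have h1 : ⟪v, a - b⟫ < 0 := by
        rw [inner_sub_right, hvx, hvx]; linarith
      rw [hudef, real_inner_smul_right, real_inner_comm]
      exact mul_nonpos_of_nonneg_of_nonpos (by positivity) h1.le
    have hsupp : ∀ w ∈ closure Ω, ⟪w - b, u⟫ ≤ 0 := by
      intro w hw
      have hcl : closure Ω ⊆ {w : E | ⟪w - b, u⟫ ≤ 0} := by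
        apply closure_minimal hsuppΩ
        have hcont : Continuous fun w : E => ⟪w - b, u⟫ :=
          (continuous_id.sub continuous_const).inner continuous_const
        exact isClosed_le hcont continuous_const
      exact hcl hw
    refine ⟨b, u, hu, hsupp, ?_⟩
    by_cases hzΩ : z ∈ Ω
    · have h1 : sdf Ω z = -dist z b := by simp [sdf, hzΩ, hbd]
      rw [h1]
      have := abs_real_inner_le_norm (z - b) u
      have h2 : ‖z - b‖ * ‖u‖ = dist z b := by rw [hu, mul_one, dist_eq_norm]
      rw [h2] at this
      have := abs_le.1 this
      linarith [this.1]
    · have hzΓ : z ∈ frontier Ω := by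
        rw [hopen.frontier_eq]; exact ⟨hz, hzΩ⟩
      have h0 : infDist z (frontier Ω) = 0 := infDist_zero_of_mem hzΓ
      have hbz : b = z := by
        have : dist z b = 0 := by rw [← hbd, h0]
        rw [dist_comm] at this; exact dist_eq_zero.1 this
      have h1 : sdf Ω z = 0 := by simp [sdf, hzΩ, h0]
      rw [h1, hbz, sub_self, inner_zero_left]
  · -- z outside the closure: project onto the closed convex hull
    obtain ⟨b, hbK, hbd⟩ := hKc.exists_infDist_eq_dist hne.closure z
    have hzb : 0 < dist z b := by
      rw [dist_pos]
      intro h; rw [h] at hz; exact hz hbK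
    have hproj : ∀ w ∈ closure Ω, ⟪z - b, w - b⟫ ≤ 0 := by
      have heq : ‖z - b‖ = ⨅ w : closure Ω, ‖z - w‖ := by
        simp_rw [← dist_eq_norm]
        rw [← hbd, infDist_eq_iInf]
      exact (norm_eq_iInf_iff_real_inner_le_zero (hconv.closure) hbK).1 heq
    set u := ‖z - b‖⁻¹ • (z - b) with hudef
    have hzbn : 0 < ‖z - b‖ := by rwa [← dist_eq_norm]
    have hu : ‖u‖ = 1 := by
      rw [hudef, norm_smul, norm_inv, norm_norm, inv_mul_cancel₀ hzbn.ne']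
    have hsupp : ∀ w ∈ closure Ω, ⟪w - b, u⟫ ≤ 0 := by
      intro w hw
      rw [hudef, real_inner_smul_right, real_inner_comm]
      exact mul_nonpos_of_nonneg_of_nonpos (by positivity) (hproj w hw)
    refine ⟨b, u, hu, hsupp, ?_⟩
    -- b is on the frontier
    have hbΓ : b ∈ frontier Ω := by
      rw [hopen.frontier_eq]
      refine ⟨hbK, fun hbΩ => ?_⟩
      obtain ⟨ε, hε, hball⟩ := Metric.isOpen_iff.1 hopen b hbΩ
      set t := min 1 (ε / (2 * ‖z - b‖)) with htdef
      have ht0 : 0 < t := lt_min one_pos (by positivity)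
      have ht1 : t ≤ 1 := min_le_left _ _
      have hb' : b + t • (z - b) ∈ Ω := by
        apply hball
        rw [Metric.mem_ball, dist_eq_norm]
        have : b + t • (z - b) - b = t • (z - b) := by abel
        rw [this, norm_smul, Real.norm_eq_abs, abs_of_pos ht0]
        calc t * ‖z - b‖ ≤ ε / (2 * ‖z - b‖) * ‖z - b‖ := by
              apply mul_le_mul_of_nonneg_right (min_le_right _ _) hzbn.le
          _ = ε / 2 := by field_simp
          _ < ε := by linarith
      have hclose : dist z (b + t • (z - b)) < dist z b := by
        rw [dist_eq_norm, dist_eq_norm]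
        have : z - (b + t • (z - b)) = (1 - t) • (z - b) := by
          rw [sub_smul, one_smul]; abel
        rw [this, norm_smul, Real.norm_eq_abs]
        rcases lt_or_eq_of_le ht1 with h' | h'
        · rw [abs_of_pos (by linarith)]
          nlinarith
        · rw [h']; simpa using hzbn
      have : infDist z (closure Ω) ≤ dist z (b + t • (z - b)) :=
        infDist_le_dist_of_mem (subset_closure hb')
      rw [hbd] at this; linarith
    have hsdf : sdf Ω z = infDist z (frontier Ω) := by
      have hzΩ : z ∉ Ω := fun h => hz (subset_closure h)
      simp [sdf, hzΩ]
    have hΓeq : infDist z (frontier Ω) = dist z b := by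
      apply le_antisymm (infDist_le_dist_of_mem hbΓ)
      rw [← hbd]
      exact infDist_le_infDist_of_subset frontier_subset_closure hΓne
    rw [hsdf, hΓeq, dist_eq_norm, hudef, real_inner_smul_right,
      real_inner_self_eq_norm_sq]
    rw [show ‖z - b‖⁻¹ * ‖z - b‖ ^ 2 = ‖z - b‖ by field_simp]

theorem stmt_1 {d : ℕ} (Ω₁ : Set (EuclideanSpace ℝ (Fin d)))
    (hne : Ω₁.Nonempty) (hbdd : Bornology.IsBounded Ω₁) (hopen : IsOpen Ω₁)
    (hconv : Convex ℝ Ω₁) :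
    ∀ x₁ x₂ : EuclideanSpace ℝ (Fin d), ∀ θ : ℝ, 0 ≤ θ → θ ≤ 1 →
      sdf Ω₁ (θ • x₁ + (1 - θ) • x₂) ≤ θ * sdf Ω₁ x₁ + (1 - θ) * sdf Ω₁ x₂ := by
  intro x₁ x₂ θ hθ0 hθ1
  rcases Nat.eq_zero_or_pos d with hd | hd
  · subst hd
    have : Subsingleton (EuclideanSpace ℝ (Fin 0)) := by
      constructor; intro a b; ext i; exact absurd i.2 (by omega)
    have e : ∀ a b : EuclideanSpace ℝ (Fin 0), sdf Ω₁ a = sdf Ω₁ b := fun a b => by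
      rw [Subsingleton.elim a b]
    rw [e (θ • x₁ + (1 - θ) • x₂) x₁, e x₂ x₁]
    have : θ * sdf Ω₁ x₁ + (1 - θ) * sdf Ω₁ x₁ = sdf Ω₁ x₁ := by ring
    linarith
  · have hfin : Nonempty (Fin d) := ⟨⟨0, hd⟩⟩
    have hnt : Nontrivial (EuclideanSpace ℝ (Fin d)) := by
      refine ⟨0, EuclideanSpace.single (Classical.arbitrary (Fin d)) (1 : ℝ), fun h => ?_⟩
      have := congrArg (fun f : EuclideanSpace ℝ (Fin d) => f (Classical.arbitrary (Fin d))) h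
      simp [EuclideanSpace.single] at this
    have hΓcl : IsClosed (frontier Ω₁) := isClosed_frontier
    have hΓbdd : Bornology.IsBounded (frontier Ω₁) := hbdd.closure.subset frontier_subset_closure
    have hΓc : IsCompact (frontier Ω₁) := Metric.isCompact_of_isClosed_isBounded hΓcl hΓbdd
    have hΩuniv : Ω₁ ≠ Set.univ := by
      intro h
      rw [h] at hbdd
      exact NormedSpace.unbounded_univ ℝ (EuclideanSpace ℝ (Fin d)) hbdd
    have hΓne : (frontier Ω₁).Nonempty := nonempty_frontier_iff.2 ⟨hne, hΩuniv⟩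
    obtain ⟨b, u, hu, hsupp, hz⟩ := aux_support hne hbdd hopen hconv (θ • x₁ + (1 - θ) • x₂)
    have h1 := aux_minorant hopen hΓc hΓne hu hsupp x₁
    have h2 := aux_minorant hopen hΓc hΓne hu hsupp x₂
    have hcomb : θ • x₁ + (1 - θ) • x₂ - b = θ • (x₁ - b) + (1 - θ) • (x₂ - b) := by
      module
    have hinner : ⟪θ • x₁ + (1 - θ) • x₂ - b, u⟫
        = θ * ⟪x₁ - b, u⟫ + (1 - θ) * ⟪x₂ - b, u⟫ := by
      rw [hcomb, inner_add_left, real_inner_smul_left, real_inner_smul_left]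
    calc sdf Ω₁ (θ • x₁ + (1 - θ) • x₂) ≤ ⟪θ • x₁ + (1 - θ) • x₂ - b, u⟫ := hz
      _ = θ * ⟪x₁ - b, u⟫ + (1 - θ) * ⟪x₂ - b, u⟫ := hinner
      _ ≤ θ * sdf Ω₁ x₁ + (1 - θ) * sdf Ω₁ x₂ :=
          add_le_add (mul_le_mul_of_nonneg_left h1 hθ0)
            (mul_le_mul_of_nonneg_left h2 (by linarith))
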